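/- Let μ be a compactly supported probability measure on ℂ, let t > 0 and γ ∈ ℂ with |γ| ≤ t, and suppose U ⊆ ℂ \ supp(μ) is a set on which ∫ |λ − z|⁻² dμ(z) < 1/t for every λ ∈ U. Define Φ(λ) = λ + γ G(λ), where G is the Cauchy transform of μ. Then Φ is injective on U. -/

import Mathlib

open MeasureTheory Metric

/-- The (closed) support of a Borel measure. -/
def MeasureTheory.Measure.msupport {α : Type*} [TopologicalSpace α] [MeasurableSpace α]
    (μ : Measure α) : Set α :=
  {x | ∀ U ∈ nhds x, 0 < μ U}

lemma msupport_compl_null {α : Type*} [TopologicalSpace α] [MeasurableSpace α]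
    [SecondCountableTopology α] (μ : Measure α) : μ μ.msupportᶜ = 0 := by
  set S : Set (Set α) := {s | IsOpen s ∧ μ s = 0} with hSdef
  obtain ⟨T, hTc, hTS, hTU⟩ := TopologicalSpace.isOpen_sUnion_countable S (fun s hs => hs.1)
  have hsub : μ.msupportᶜ ⊆ ⋃₀ S := by
    intro x hx
    have hx' : ¬ ∀ V ∈ nhds x, 0 < μ V := hx
    push_neg at hx'
    obtain ⟨V, hV, hVpos⟩ := hx'
    have hV0 : μ V = 0 := le_antisymm hVpos zero_le
    obtain ⟨W, hWV, hWopen, hxW⟩ := mem_nhds_iff.mp hV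
    exact ⟨W, ⟨hWopen, le_antisymm ((measure_mono hWV).trans hV0.le) zero_le⟩, hxW⟩
  refine le_antisymm ?_ zero_le
  calc μ μ.msupportᶜ ≤ μ (⋃₀ S) := measure_mono hsub
    _ = μ (⋃₀ T) := by rw [hTU]
    _ = 0 := (measure_sUnion_null_iff hTc).2 fun s hs => (hTS hs).2

lemma msupport_isClosed {α : Type*} [TopologicalSpace α] [MeasurableSpace α]
    (μ : Measure α) : IsClosed μ.msupport := by
  rw [← isOpen_compl_iff, isOpen_iff_mem_nhds]
  intro x hx
  have hx' : ¬ ∀ V ∈ nhds x, 0 < μ V := hx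
  push_neg at hx'
  obtain ⟨V, hV, hVpos⟩ := hx'
  obtain ⟨W, hWV, hWopen, hxW⟩ := mem_nhds_iff.mp hV
  filter_upwards [hWopen.mem_nhds hxW] with y hy
  intro hmem
  exact absurd ((hmem W (hWopen.mem_nhds hy)).trans_le (measure_mono hWV)) (not_lt.mpr hVpos)

/-- Let `μ` be a compactly supported probability measure on `ℂ`, `t > 0`, `γ ∈ ℂ` with
`|γ| ≤ t`, and `U` a subset of the complement of `supp μ` on which
`∫ |λ-z|⁻² dμ(z) < 1/t`. Then `Φ(λ) = λ + γ G(λ)` (with `G` the Cauchy transform of `μ`)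
is injective on `U`. -/
theorem injOn_lam_add_gamma_cauchy (μ : Measure ℂ) [IsProbabilityMeasure μ]
    (hcomp : IsCompact μ.msupport) (t : ℝ) (ht : 0 < t) (γ : ℂ) (hγ : ‖γ‖ ≤ t)
    (U : Set ℂ) (hU : U ⊆ μ.msupportᶜ)
    (hbound : ∀ lam ∈ U, (∫ z, (‖lam - z‖ ^ 2)⁻¹ ∂μ) < 1 / t) :
    Set.InjOn (fun lam => lam + γ * ∫ z, (lam - z)⁻¹ ∂μ) U := by
  intro l1 h1 l2 h2 heq
  by_contra hne
  set S := μ.msupport with hSdef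
  have hSclosed : IsClosed S := msupport_isClosed μ
  have hSnull : μ Sᶜ = 0 := msupport_compl_null μ
  have hSne : S.Nonempty := by
    rcases Set.eq_empty_or_nonempty S with h | h
    · exfalso
      have : μ Set.univ = 0 := by
        rw [← Set.compl_empty, ← h]; exact hSnull
      simp [measure_univ] at this
    · exact h
  have hae : ∀ᵐ z ∂μ, z ∈ S := by
    rw [ae_iff]
    convert hSnull using 2
    rfl
  -- distances
  have hd1 : 0 < infDist l1 S := (hSclosed.notMem_iff_infDist_pos hSne).mp (hU h1)
  have hd2 : 0 < infDist l2 S := (hSclosed.notMem_iff_infDist_pos hSne).mp (hU h2)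
  set d1 := infDist l1 S
  set d2 := infDist l2 S
  have hdist : ∀ (l : ℂ), ∀ z ∈ S, infDist l S ≤ ‖l - z‖ := by
    intro l z hz
    rw [← dist_eq_norm]
    exact infDist_le_dist_of_mem hz
  -- measurability
  have hm1 : Measurable fun z : ℂ => (l1 - z)⁻¹ :=
    (measurable_const.sub measurable_id).inv
  have hm2 : Measurable fun z : ℂ => (l2 - z)⁻¹ :=
    (measurable_const.sub measurable_id).inv
  have hmf : Measurable fun z : ℂ => ((l1 - z) * (l2 - z))⁻¹ :=
    ((measurable_const.sub measurable_id).mul (measurable_const.sub measurable_id)).inv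
  -- integrability of f
  have hif : Integrable (fun z : ℂ => ((l1 - z) * (l2 - z))⁻¹) μ := by
    refine (integrable_const ((d1 * d2)⁻¹)).mono' hmf.aestronglyMeasurable ?_
    filter_upwards [hae] with z hz
    rw [norm_inv, norm_mul]
    have h1' := hdist l1 z hz
    have h2' := hdist l2 z hz
    exact inv_anti₀ (by positivity) (mul_le_mul h1' h2' hd2.le (norm_nonneg _))
  -- integrability of g1, g2
  have hig : ∀ (l : ℂ), l ∈ U → Integrable (fun z : ℂ => (l - z)⁻¹) μ := by
    intro l hl
    have hd : 0 < infDist l S := (hSclosed.notMem_iff_infDist_pos hSne).mp (hU hl)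
    refine (integrable_const ((infDist l S)⁻¹)).mono'
      (measurable_const.sub measurable_id).inv.aestronglyMeasurable ?_
    filter_upwards [hae] with z hz
    rw [norm_inv]
    exact inv_anti₀ hd (hdist l z hz)
  -- integrability of squares
  have hisq : ∀ (l : ℂ), l ∈ U → Integrable (fun z : ℂ => (‖l - z‖ ^ 2)⁻¹) μ := by
    intro l hl
    have hd : 0 < infDist l S := (hSclosed.notMem_iff_infDist_pos hSne).mp (hU hl)
    refine (integrable_const (((infDist l S) ^ 2)⁻¹)).mono'
      (((measurable_const.sub measurable_id).norm.pow_const 2).inv).aestronglyMeasurable ?_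
    filter_upwards [hae] with z hz
    rw [Real.norm_eq_abs, abs_inv, abs_of_nonneg (by positivity)]
    exact inv_anti₀ (by positivity) (pow_le_pow_left₀ hd.le (hdist l z hz) 2)
  -- key algebraic identity a.e.
  have hkey : (∫ z, (l2 - z)⁻¹ ∂μ) - (∫ z, (l1 - z)⁻¹ ∂μ)
      = (l1 - l2) * ∫ z, ((l1 - z) * (l2 - z))⁻¹ ∂μ := by
    rw [← integral_sub (hig l2 h2) (hig l1 h1), ← integral_const_mul]
    refine integral_congr_ae ?_
    filter_upwards [hae] with z hz
    have ha : l1 - z ≠ 0 := by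
      have := hdist l1 z hz
      intro h; rw [h, norm_zero] at this; linarith
    have hb : l2 - z ≠ 0 := by
      have := hdist l2 z hz
      intro h; rw [h, norm_zero] at this; linarith
    field_simp
    try ring
    try exact Or.inl trivial
  -- from the equality
  have hne' : l1 - l2 ≠ 0 := sub_ne_zero.mpr hne
  set K := ∫ z, ((l1 - z) * (l2 - z))⁻¹ ∂μ with hK
  have heq2 : γ * K = 1 := by
    have h0 : l1 - l2 = γ * ((∫ z, (l2 - z)⁻¹ ∂μ) - (∫ z, (l1 - z)⁻¹ ∂μ)) := by
      have := heq
      simp only at this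
      linear_combination this
    rw [hkey] at h0
    have hcan : (l1 - l2) * (γ * K) = (l1 - l2) * 1 := by
      rw [mul_one]; linear_combination -h0
    exact mul_left_cancel₀ hne' hcan
  -- norm bound on K
  have hKnorm : ‖K‖ ≤ ∫ z, ‖l1 - z‖⁻¹ * ‖l2 - z‖⁻¹ ∂μ := by
    calc ‖K‖ ≤ ∫ z, ‖((l1 - z) * (l2 - z))⁻¹‖ ∂μ := norm_integral_le_integral_norm _
      _ = ∫ z, ‖l1 - z‖⁻¹ * ‖l2 - z‖⁻¹ ∂μ := by
          refine integral_congr_ae (Filter.Eventually.of_forall fun z => ?_)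
          simp [norm_mul, mul_inv, mul_comm]
  have hAM : (∫ z, ‖l1 - z‖⁻¹ * ‖l2 - z‖⁻¹ ∂μ)
      ≤ ((∫ z, (‖l1 - z‖ ^ 2)⁻¹ ∂μ) + ∫ z, (‖l2 - z‖ ^ 2)⁻¹ ∂μ) / 2 := by
    rw [← integral_add (hisq l1 h1) (hisq l2 h2), ← integral_div]
    refine integral_mono_ae ?_ (((hisq l1 h1).add (hisq l2 h2)).div_const 2) ?_
    · have := hif.norm
      refine this.congr (Filter.Eventually.of_forall fun z => ?_)
      simp [norm_mul, mul_inv, mul_comm]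
    · filter_upwards with z
      have h2' : (‖l1 - z‖ ^ 2)⁻¹ = (‖l1 - z‖⁻¹) ^ 2 := by rw [inv_pow]
      have h3' : (‖l2 - z‖ ^ 2)⁻¹ = (‖l2 - z‖⁻¹) ^ 2 := by rw [inv_pow]
      rw [h2', h3']
      nlinarith [sq_nonneg (‖l1 - z‖⁻¹ - ‖l2 - z‖⁻¹)]
  have hK2 : ‖K‖ < 1 / t := by
    have hb1 := hbound l1 h1
    have hb2 := hbound l2 h2
    calc ‖K‖ ≤ _ := hKnorm
      _ ≤ _ := hAM
      _ < 1 / t := by linarith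
  -- contradiction
  have h1' : (1 : ℝ) = ‖γ * K‖ := by rw [heq2, norm_one]
  rw [norm_mul] at h1'
  have hγpos : 0 < ‖γ‖ := by
    by_contra h
    push_neg at h
    have : ‖γ‖ = 0 := le_antisymm h (norm_nonneg _)
    rw [this, zero_mul] at h1'
    norm_num at h1'
  have : ‖γ‖ * ‖K‖ < t * (1 / t) := by
    apply mul_lt_mul' hγ hK2 (norm_nonneg _) ht
  rw [mul_one_div, div_self ht.ne'] at this
  linarith
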